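/- The number W₄ = 1 + V₄, where V₄ = -λ/(1 + (n/2)(γ-1)), is a real root of the cubic [nk₁-1]W³ - [nk₂ - βk₁ + α + (λ-2)]W² + [nk₃ - βk₂ - (λ-2)α + (λ-1)]W + [βk₃ + (λ-1)α] = 0, where β = -n(1+V_*); this holds for all values of the parameters n ∈ {2,3}, γ > 1, λ, κ. -/

import Mathlib

noncomputable section

/-- `V_* = (κ - 2(λ-1))/(nγ)` -/
def Vstar (n γ lam κ : ℝ) : ℝ := (κ - 2*(lam - 1)) / (n*γ)

/-- `α = (κ(γ-1) + 2(λ-1))/(2γ)` -/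
def alphaP (γ lam κ : ℝ) : ℝ := (κ*(γ - 1) + 2*(lam - 1)) / (2*γ)

/-- `k₁ = 1 + (n-1)(γ-1)/2` -/
def K1 (n γ : ℝ) : ℝ := 1 + (n - 1)*(γ - 1)/2

/-- `k₂ = ((n-1)(γ-1) + (γ-3)(λ-1))/2` -/
def K2 (n γ lam : ℝ) : ℝ := ((n - 1)*(γ - 1) + (γ - 3)*(lam - 1)) / 2

/-- `k₃ = (γ-1)(λ-1)/2` -/
def K3 (γ lam : ℝ) : ℝ := (γ - 1)*(lam - 1)/2

/-- `G(V,C) = nC²(V - V_*) - V(1+V)(λ+V)` -/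
def Gf (n γ lam κ V C : ℝ) : ℝ := n*C^2*(V - Vstar n γ lam κ) - V*(1+V)*(lam+V)

/-- `F(V,C) = C[C²(1 + α/(1+V)) - k₁(1+V)² + k₂(1+V) - k₃]` -/
def Ff (n γ lam κ V C : ℝ) : ℝ :=
  C*(C^2*(1 + alphaP γ lam κ/(1+V)) - K1 n γ*(1+V)^2 + K2 n γ lam*(1+V) - K3 γ lam)

/-- The cubic in `W = 1+V` obtained by substituting `C² = V(1+V)(λ+V)/(n(V-V_*))`
into `F(V,C) = 0`; here `β = -n(1+V_*)`. -/
def cubicP (n γ lam κ W : ℝ) : ℝ :=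
  (n*K1 n γ - 1)*W^3
    - (n*K2 n γ lam - (-n*(1 + Vstar n γ lam κ))*K1 n γ + alphaP γ lam κ + (lam - 2))*W^2
    + (n*K3 γ lam - (-n*(1 + Vstar n γ lam κ))*K2 n γ lam - (lam - 2)*alphaP γ lam κ + (lam - 1))*W
    + ((-n*(1 + Vstar n γ lam κ))*K3 γ lam + (lam - 1)*alphaP γ lam κ)

set_option maxHeartbeats 2000000

/-- `W₄ = 1 + V₄`, with `V₄ = -λ/(1 + (n/2)(γ-1))`, is always a root of the cubic. -/
theorem stmt_2 (n γ lam κ : ℝ) (hn : n = 2 ∨ n = 3) (hγ : 1 < γ) :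
    cubicP n γ lam κ (1 + (-lam/(1 + (n/2)*(γ - 1)))) = 0 := by
  have hγ0 : γ ≠ 0 := by linarith
  rcases hn with rfl | rfl
  · have hd : 1 + (2/2)*(γ - 1) ≠ 0 := by norm_num; linarith
    unfold cubicP Vstar alphaP K1 K2 K3
    field_simp
    ring_nf
    field_simp
    ring
  · have hd : 1 + (3/2)*(γ - 1) ≠ 0 := by nlinarith
    have hd2 : -1 + γ*3 ≠ 0 := by nlinarith
    unfold cubicP Vstar alphaP K1 K2 K3
    field_simp
    ring_nf
    field_simp
    ring
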